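/- For a,b,c ∈ ℂ, the formulas d_m v_i = (a + i + bm)v_{m+i} and Y_n v_i = c v_{n+i} define a module structure on ⊕_{i∈ℤ}ℂv_i over the Lie algebra 𝒟 with relations [d_m,d_n]=(n-m)d_{m+n}, [d_m,Y_n]=nY_{m+n}, [Y_m,Y_n]=0. -/

import Mathlib

/-- The action of the Witt-algebra generator `d_m` on the module
`𝒜_{a,b} = ⊕_{i∈ℤ} ℂ vᵢ` (encoded as `ℤ →₀ ℂ`, with `vᵢ = single i 1`):
`d_m · vᵢ = (a + i + b m) v_{m+i}`, extended linearly. -/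
noncomputable def dAct (a b : ℂ) (m : ℤ) (v : ℤ →₀ ℂ) : ℤ →₀ ℂ :=
  v.sum fun i c => Finsupp.single (m + i) ((a + (i : ℂ) + b * (m : ℂ)) * c)

/-- The action of the generator `Y_n` of the twisted Heisenberg–Virasoro algebra `𝒟`
on `𝒜_{a,b,c}`: `Y_n · vᵢ = c v_{n+i}`, extended linearly. -/
noncomputable def yAct (c : ℂ) (n : ℤ) (v : ℤ →₀ ℂ) : ℤ →₀ ℂ :=
  v.sum fun i co => Finsupp.single (n + i) (c * co)

lemma dAct_single (a b : ℂ) (m i : ℤ) (x : ℂ) :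
    dAct a b m (Finsupp.single i x) = Finsupp.single (m + i) ((a + (i : ℂ) + b * m) * x) := by
  unfold dAct
  exact Finsupp.sum_single_index (by rw [mul_zero, Finsupp.single_zero])

lemma yAct_single (c : ℂ) (n i : ℤ) (x : ℂ) :
    yAct c n (Finsupp.single i x) = Finsupp.single (n + i) (c * x) := by
  unfold yAct
  exact Finsupp.sum_single_index (by rw [mul_zero, Finsupp.single_zero])

lemma dAct_add (a b : ℂ) (m : ℤ) (v w : ℤ →₀ ℂ) :
    dAct a b m (v + w) = dAct a b m v + dAct a b m w := by
  unfold dAct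
  rw [Finsupp.sum_add_index] <;> simp [mul_add, Finsupp.single_add]

lemma yAct_add (c : ℂ) (n : ℤ) (v w : ℤ →₀ ℂ) :
    yAct c n (v + w) = yAct c n v + yAct c n w := by
  unfold yAct
  rw [Finsupp.sum_add_index] <;> simp [mul_add, Finsupp.single_add]

/-- the formulas `d_m vᵢ = (a + i + bm) v_{m+i}` and `Y_n vᵢ = c v_{n+i}`
define a `𝒟`-module structure on `⊕_{i∈ℤ} ℂvᵢ`: the operators satisfy the relations
`[d_m, d_n] = (n-m) d_{m+n}`, `[d_m, Y_n] = n Y_{m+n}`, `[Y_m, Y_n] = 0`. -/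
theorem Aabc_D_module (a b c : ℂ) :
    (∀ (m n : ℤ) (v : ℤ →₀ ℂ),
      dAct a b m (dAct a b n v) - dAct a b n (dAct a b m v)
        = ((n : ℂ) - (m : ℂ)) • dAct a b (m + n) v) ∧
    (∀ (m n : ℤ) (v : ℤ →₀ ℂ),
      dAct a b m (yAct c n v) - yAct c n (dAct a b m v) = (n : ℂ) • yAct c (m + n) v) ∧
    (∀ (m n : ℤ) (v : ℤ →₀ ℂ), yAct c m (yAct c n v) = yAct c n (yAct c m v)) := by
  refine ⟨?_, ?_, ?_⟩
  · intro m n v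
    induction v using Finsupp.induction_linear with
    | zero => simp [dAct]
    | add v w hv hw =>
        simp only [dAct_add, smul_add] at *
        rw [← hv, ← hw]; abel
    | single i x =>
        rw [dAct_single, dAct_single, dAct_single, dAct_single, dAct_single,
          Finsupp.smul_single,
          show m + (n + i) = n + (m + i) by ring,
          show m + n + i = n + (m + i) by ring,
          ← Finsupp.single_sub]
        congr 1
        rw [smul_eq_mul]
        push_cast
        ring
  · intro m n v
    induction v using Finsupp.induction_linear with
    | zero => simp [dAct, yAct]
    | add v w hv hw =>
        simp only [dAct_add, yAct_add, smul_add] at *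
        rw [← hv, ← hw]; abel
    | single i x =>
        rw [yAct_single, dAct_single, dAct_single, yAct_single, yAct_single,
          Finsupp.smul_single,
          show m + (n + i) = n + (m + i) by ring,
          show m + n + i = n + (m + i) by ring,
          ← Finsupp.single_sub]
        congr 1
        rw [smul_eq_mul]
        push_cast
        ring
  · intro m n v
    induction v using Finsupp.induction_linear with
    | zero => simp [yAct]
    | add v w hv hw => simp only [yAct_add, hv, hw]
    | single i x =>
        rw [yAct_single, yAct_single, yAct_single, yAct_single,
          show m + (n + i) = n + (m + i) by ring]
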